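/- Let k be a perfect field of characteristic 2 with algebraic closure k̄ and absolute Galois group G_k = Gal(k̄/k). Let G_k act on the projective line ℙ¹(k̄) coordinatewise and let PGL₂(k) act on ℙ¹(k̄) by projective linear transformations. If S, S′ ⊆ ℙ¹(k̄) are G_k-stable subsets with |S| = |S′| = 3, then there exists γ ∈ PGL₂(k) with γ(S) = S′ if and only if S and S′ are isomorphic as G_k-sets, i.e. there exists a G_k-equivariant bijection S → S′. -/

import Mathlib

open scoped LinearAlgebra.Projectivization

noncomputable section

variable (k : Type*) [Field k] [CharP k 2] [PerfectField k]

/-- The semilinear endomorphism of `k̄²` induced by a `k`-automorphism `σ` of `k̄`. -/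
def galSemilinear (σ : AlgebraicClosure k ≃ₐ[k] AlgebraicClosure k) :
    (Fin 2 → AlgebraicClosure k)
      →ₛₗ[(σ : AlgebraicClosure k →+* AlgebraicClosure k)] (Fin 2 → AlgebraicClosure k) where
  toFun v := fun i => σ (v i)
  map_add' u v := by funext i; simp
  map_smul' c v := by funext i; simp [Pi.smul_apply, smul_eq_mul]

/-- The coordinatewise action of the absolute Galois group `G_k = Gal(k̄/k)` on the
projective line `ℙ¹(k̄)`: `σ·[x : y] = [σx : σy]`. -/
def galAct (σ : AlgebraicClosure k ≃ₐ[k] AlgebraicClosure k)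
    (p : ℙ (AlgebraicClosure k) (Fin 2 → AlgebraicClosure k)) :
    ℙ (AlgebraicClosure k) (Fin 2 → AlgebraicClosure k) :=
  Projectivization.map (galSemilinear k σ)
    (fun _ _ h => funext fun i => σ.injective (congrFun h i)) p

/-- An invertible matrix acts injectively on row vectors. -/
theorem mulVecLin_injective_of_unit {R : Type*} [CommRing R] {n : Type*} [Fintype n]
    [DecidableEq n] (g : GL n R) :
    Function.Injective (Matrix.mulVecLin (g : Matrix n n R)) := by
  intro u v h
  have h' : (g : Matrix n n R).mulVec u = (g : Matrix n n R).mulVec v := h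
  have h2 := congrArg ((↑(g⁻¹) : Matrix n n R).mulVec) h'
  rwa [Matrix.mulVec_mulVec, Matrix.mulVec_mulVec, ← Units.val_mul, inv_mul_cancel,
    Units.val_one, Matrix.one_mulVec, Matrix.one_mulVec] at h2

/-- The action of `GL₂(k)` (hence of `PGL₂(k)`, through which it factors) on the projective
line `ℙ¹(k̄)`, by projective linear transformations. -/
def pglAct (g : GL (Fin 2) k)
    (p : ℙ (AlgebraicClosure k) (Fin 2 → AlgebraicClosure k)) :
    ℙ (AlgebraicClosure k) (Fin 2 → AlgebraicClosure k) :=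
  Projectivization.map
    (Matrix.mulVecLin
      ((Matrix.GeneralLinearGroup.map (algebraMap k (AlgebraicClosure k)) g : _) :
        Matrix (Fin 2) (Fin 2) (AlgebraicClosure k)))
    (mulVecLin_injective_of_unit _)
    p

namespace Stmt3

variable {L : Type*} [Field L]

/-- action of GL₂ on ℙ¹ -/
def pAct (g : GL (Fin 2) L) : ℙ L (Fin 2 → L) → ℙ L (Fin 2 → L) :=
  Projectivization.map
    (Matrix.mulVecLin (g : Matrix (Fin 2) (Fin 2) L))
    (mulVecLin_injective_of_unit _)

theorem mulVec_ne_zero (g : GL (Fin 2) L) {v : Fin 2 → L} (hv : v ≠ 0) :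
    (g : Matrix (Fin 2) (Fin 2) L).mulVec v ≠ 0 := by
  intro h
  apply hv
  have : (g : Matrix (Fin 2) (Fin 2) L).mulVecLin v = (g : Matrix (Fin 2) (Fin 2) L).mulVecLin 0 := by
    simpa [h] using (map_zero ((g : Matrix (Fin 2) (Fin 2) L).mulVecLin)).symm
  exact mulVecLin_injective_of_unit g this

theorem pAct_mk (g : GL (Fin 2) L) (v : Fin 2 → L) (hv : v ≠ 0) :
    pAct g (Projectivization.mk L v hv)
      = Projectivization.mk L ((g : Matrix (Fin 2) (Fin 2) L).mulVec v) (mulVec_ne_zero g hv) := by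
  exact Projectivization.map_mk _ _ v hv

theorem pAct_pAct (g h : GL (Fin 2) L) (p : ℙ L (Fin 2 → L)) :
    pAct g (pAct h p) = pAct (g * h) p := by
  induction p using Projectivization.ind with
  | h v hv =>
    rw [pAct_mk, pAct_mk, pAct_mk, Projectivization.mk_eq_mk_iff']
    exact ⟨1, by rw [one_smul, Matrix.mulVec_mulVec, Units.val_mul]⟩

theorem pAct_one (p : ℙ L (Fin 2 → L)) : pAct (1 : GL (Fin 2) L) p = p := by
  induction p using Projectivization.ind with
  | h v hv =>
    rw [pAct_mk, Projectivization.mk_eq_mk_iff']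
    exact ⟨1, by rw [one_smul, Units.val_one, Matrix.one_mulVec]⟩

theorem pAct_of_smul {g h : GL (Fin 2) L} {c : Lˣ}
    (hc : (g : Matrix (Fin 2) (Fin 2) L) = (c : L) • (h : Matrix (Fin 2) (Fin 2) L))
    (p : ℙ L (Fin 2 → L)) : pAct g p = pAct h p := by
  induction p using Projectivization.ind with
  | h v hv =>
    rw [pAct_mk, pAct_mk, Projectivization.mk_eq_mk_iff]
    exact ⟨c, by rw [hc, Matrix.smul_mulVec]; rfl⟩

/-- standard points -/
def E₁ : ℙ L (Fin 2 → L) := Projectivization.mk L ![1, 0] (by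
  intro h; simpa using congrFun h 0)
def E₂ : ℙ L (Fin 2 → L) := Projectivization.mk L ![0, 1] (by
  intro h; simpa using congrFun h 1)
def E₃ : ℙ L (Fin 2 → L) := Projectivization.mk L ![1, 1] (by
  intro h; simpa using congrFun h 0)

theorem prop_of_det {v w : Fin 2 → L} (hv : v ≠ 0)
    (hd : v 0 * w 1 - v 1 * w 0 = 0) : ∃ c : L, w = c • v := by
  have hd' : v 0 * w 1 = v 1 * w 0 := by linear_combination hd
  by_cases h0 : v 0 = 0
  · have h1 : v 1 ≠ 0 := by
      intro h1; apply hv; funext i; fin_cases i <;> simpa [h0]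
    refine ⟨w 1 / v 1, funext fun i => ?_⟩
    have hw0 : w 0 = 0 := by
      have := hd'; rw [h0, zero_mul] at this
      exact (mul_eq_zero.1 this.symm).resolve_left h1
    fin_cases i <;> simp [Pi.smul_apply, smul_eq_mul, h0, hw0, div_mul_cancel₀, h1]
  · refine ⟨w 0 / v 0, funext fun i => ?_⟩
    fin_cases i
    · simp [Pi.smul_apply, smul_eq_mul, div_mul_cancel₀, h0]
    · show w 1 = w 0 / v 0 * v 1
      field_simp
      linear_combination hd'

theorem det_ne_zero_of_ne {v w : Fin 2 → L} (hv : v ≠ 0) (hw : w ≠ 0)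
    (hne : Projectivization.mk L v hv ≠ Projectivization.mk L w hw) :
    v 0 * w 1 - v 1 * w 0 ≠ 0 := by
  intro hd
  obtain ⟨c, hc⟩ := prop_of_det hv hd
  exact hne ((Projectivization.mk_eq_mk_iff' L w v hw hv).2 ⟨c, hc.symm⟩).symm

end Stmt3

namespace Stmt3
variable {L : Type*} [Field L]

theorem exists_pAct_E (p₁ p₂ p₃ : ℙ L (Fin 2 → L)) (h12 : p₁ ≠ p₂) (h13 : p₁ ≠ p₃)
    (h23 : p₂ ≠ p₃) :
    ∃ g : GL (Fin 2) L, pAct g E₁ = p₁ ∧ pAct g E₂ = p₂ ∧ pAct g E₃ = p₃ := by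
  obtain ⟨v₁, hv₁, rfl⟩ : ∃ v h, Projectivization.mk L v h = p₁ :=
    ⟨p₁.rep, p₁.rep_nonzero, p₁.mk_rep⟩
  obtain ⟨v₂, hv₂, rfl⟩ : ∃ v h, Projectivization.mk L v h = p₂ :=
    ⟨p₂.rep, p₂.rep_nonzero, p₂.mk_rep⟩
  obtain ⟨v₃, hv₃, rfl⟩ : ∃ v h, Projectivization.mk L v h = p₃ :=
    ⟨p₃.rep, p₃.rep_nonzero, p₃.mk_rep⟩
  set D : L := v₁ 0 * v₂ 1 - v₁ 1 * v₂ 0 with hDdef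
  have hD : D ≠ 0 := det_ne_zero_of_ne hv₁ hv₂ h12
  have hA : v₃ 0 * v₂ 1 - v₃ 1 * v₂ 0 ≠ 0 := det_ne_zero_of_ne hv₃ hv₂ h23.symm
  have hB : v₁ 0 * v₃ 1 - v₁ 1 * v₃ 0 ≠ 0 := det_ne_zero_of_ne hv₁ hv₃ h13
  set α : L := (v₃ 0 * v₂ 1 - v₃ 1 * v₂ 0) / D with hαdef
  set β : L := (v₁ 0 * v₃ 1 - v₁ 1 * v₃ 0) / D with hβdef
  have hα : α ≠ 0 := div_ne_zero hA hD
  have hβ : β ≠ 0 := div_ne_zero hB hD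
  have hsum : ∀ i, α * v₁ i + β * v₂ i = v₃ i := by
    intro i
    rw [hαdef, hβdef, div_mul_eq_mul_div, div_mul_eq_mul_div, ← add_div, div_eq_iff hD,
      hDdef]
    fin_cases i <;> (simp only [Fin.mk_one, Fin.zero_eta, Fin.isValue]; ring)
  set M : Matrix (Fin 2) (Fin 2) L :=
    Matrix.of ![![α * v₁ 0, β * v₂ 0], ![α * v₁ 1, β * v₂ 1]] with hMdef
  have hMdet : M.det ≠ 0 := by
    rw [Matrix.det_fin_two]
    have : M 0 0 * M 1 1 - M 0 1 * M 1 0 = α * β * D := by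
      simp only [hMdef, hDdef, Matrix.of_apply]
      show α * v₁ 0 * (β * v₂ 1) - β * v₂ 0 * (α * v₁ 1) = _
      ring
    rw [this]
    exact mul_ne_zero (mul_ne_zero hα hβ) hD
  have hMunit : IsUnit M := (Matrix.isUnit_iff_isUnit_det M).2 (isUnit_iff_ne_zero.2 hMdet)
  refine ⟨hMunit.unit, ?_, ?_, ?_⟩
  · rw [E₁, pAct_mk, Projectivization.mk_eq_mk_iff']
    refine ⟨α, funext fun i => ?_⟩
    rw [hMunit.unit_spec]
    fin_cases i <;>
      simp [hMdef, Matrix.mulVec, dotProduct, Fin.sum_univ_two, smul_eq_mul]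
  · rw [E₂, pAct_mk, Projectivization.mk_eq_mk_iff']
    refine ⟨β, funext fun i => ?_⟩
    rw [hMunit.unit_spec]
    fin_cases i <;>
      simp [hMdef, Matrix.mulVec, dotProduct, Fin.sum_univ_two, smul_eq_mul]
  · rw [E₃, pAct_mk, Projectivization.mk_eq_mk_iff']
    refine ⟨1, funext fun i => ?_⟩
    rw [hMunit.unit_spec]
    have := (hsum i).symm
    fin_cases i <;>
      simpa [hMdef, Matrix.mulVec, dotProduct, Fin.sum_univ_two, smul_eq_mul] using this
end Stmt3

namespace Stmt3
variable {L : Type*} [Field L]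

theorem eq_scalar_of_fix_E (g : GL (Fin 2) L)
    (h1 : pAct g E₁ = (E₁ : ℙ L (Fin 2 → L)))
    (h2 : pAct g E₂ = (E₂ : ℙ L (Fin 2 → L)))
    (h3 : pAct g E₃ = (E₃ : ℙ L (Fin 2 → L))) :
    ∃ c : Lˣ, (g : Matrix (Fin 2) (Fin 2) L) = (c : L) • 1 := by
  rw [E₁, pAct_mk, Projectivization.mk_eq_mk_iff'] at h1
  rw [E₂, pAct_mk, Projectivization.mk_eq_mk_iff'] at h2
  rw [E₃, pAct_mk, Projectivization.mk_eq_mk_iff'] at h3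
  obtain ⟨a, ha⟩ := h1
  obtain ⟨b, hb⟩ := h2
  obtain ⟨cc, hc⟩ := h3
  have ha0 := congrFun ha 0
  have ha1 := congrFun ha 1
  have hb0 := congrFun hb 0
  have hb1 := congrFun hb 1
  have hc0 := congrFun hc 0
  have hc1 := congrFun hc 1
  simp only [Matrix.mulVec, dotProduct, Fin.sum_univ_two, Pi.smul_apply,
    Matrix.cons_val_zero, Matrix.cons_val_one, Matrix.head_cons, smul_eq_mul,
    mul_one, mul_zero, add_zero, zero_add] at ha0 ha1 hb0 hb1 hc0 hc1
  have hab : a = b := by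
    have h1 : cc = a := by rw [hc0, ← ha0, ← hb0, add_zero]
    have h2 : cc = b := by rw [hc1, ← ha1, ← hb1, zero_add]
    rw [← h1, h2]
  have hdet : (g : Matrix (Fin 2) (Fin 2) L).det ≠ 0 :=
    isUnit_iff_ne_zero.1 ((Matrix.isUnit_iff_isUnit_det _).1 ⟨g, rfl⟩)
  have ha' : a ≠ 0 := by
    intro h0
    apply hdet
    rw [Matrix.det_fin_two, ← ha0, ← hb1, ← hab, h0, zero_mul, ← hb0, zero_mul, sub_zero]
  refine ⟨Units.mk0 a ha', ?_⟩
  ext i j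
  fin_cases i <;> fin_cases j <;>
    simp [Matrix.one_apply, ← ha0, ← ha1, ← hb0, ← hb1, hab]
end Stmt3

namespace Stmt3
variable {L : Type*} [Field L]

theorem smul_of_pAct_eq (g g' : GL (Fin 2) L) {p₁ p₂ p₃ : ℙ L (Fin 2 → L)}
    (h12 : p₁ ≠ p₂) (h13 : p₁ ≠ p₃) (h23 : p₂ ≠ p₃)
    (e1 : pAct g p₁ = pAct g' p₁) (e2 : pAct g p₂ = pAct g' p₂)
    (e3 : pAct g p₃ = pAct g' p₃) :
    ∃ c : Lˣ, (g : Matrix (Fin 2) (Fin 2) L) = (c : L) • (g' : Matrix (Fin 2) (Fin 2) L) := by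
  obtain ⟨h, hE1, hE2, hE3⟩ := exists_pAct_E p₁ p₂ p₃ h12 h13 h23
  set u : GL (Fin 2) L := h⁻¹ * (g'⁻¹ * g) * h with hudef
  have key : ∀ (E p : ℙ L (Fin 2 → L)), pAct h E = p → pAct g p = pAct g' p →
      pAct u E = E := by
    intro E p hp hgp
    have fix : pAct (g'⁻¹ * g) p = p := by
      rw [← pAct_pAct, hgp, pAct_pAct, inv_mul_cancel, pAct_one]
    calc pAct u E = pAct h⁻¹ (pAct (g'⁻¹ * g) (pAct h E)) := by
          rw [pAct_pAct, pAct_pAct, hudef, mul_assoc]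
      _ = pAct h⁻¹ (pAct h E) := by rw [hp, fix, ← hp]
      _ = E := by rw [pAct_pAct, inv_mul_cancel, pAct_one]
  obtain ⟨c, hc⟩ := eq_scalar_of_fix_E u (key _ _ hE1 e1) (key _ _ hE2 e2) (key _ _ hE3 e3)
  refine ⟨c, ?_⟩
  have hgu : g = g' * (h * u * h⁻¹) := by rw [hudef]; group
  calc (g : Matrix (Fin 2) (Fin 2) L)
      = (g' : Matrix (Fin 2) (Fin 2) L) * ((h : Matrix (Fin 2) (Fin 2) L) *
          (u : Matrix (Fin 2) (Fin 2) L) * ((h⁻¹ : GL (Fin 2) L) : Matrix (Fin 2) (Fin 2) L)) := by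
        rw [hgu]; simp [Units.val_mul, mul_assoc]
    _ = (c : L) • (g' : Matrix (Fin 2) (Fin 2) L) := by
        rw [hc, Matrix.mul_smul, Matrix.mul_one, Matrix.smul_mul, ← Units.val_mul,
          mul_inv_cancel, Units.val_one, Matrix.mul_smul, Matrix.mul_one]

theorem exists_pAct_triple {p₁ p₂ p₃ q₁ q₂ q₃ : ℙ L (Fin 2 → L)}
    (h12 : p₁ ≠ p₂) (h13 : p₁ ≠ p₃) (h23 : p₂ ≠ p₃)
    (k12 : q₁ ≠ q₂) (k13 : q₁ ≠ q₃) (k23 : q₂ ≠ q₃) :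
    ∃ g : GL (Fin 2) L, pAct g p₁ = q₁ ∧ pAct g p₂ = q₂ ∧ pAct g p₃ = q₃ := by
  obtain ⟨gp, hp1, hp2, hp3⟩ := exists_pAct_E p₁ p₂ p₃ h12 h13 h23
  obtain ⟨gq, hq1, hq2, hq3⟩ := exists_pAct_E q₁ q₂ q₃ k12 k13 k23
  refine ⟨gq * gp⁻¹, ?_, ?_, ?_⟩ <;>
    [rw [← hp1, ← hq1]; rw [← hp2, ← hq2]; rw [← hp3, ← hq3]] <;>
    rw [pAct_pAct, inv_mul_cancel_right]
end Stmt3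


namespace Stmt3

theorem gal_ne_zero (σ : AlgebraicClosure k ≃ₐ[k] AlgebraicClosure k)
    {v : Fin 2 → AlgebraicClosure k} (hv : v ≠ 0) :
    (fun i => σ (v i)) ≠ 0 := by
  intro h
  refine hv (funext fun i => σ.injective ?_)
  have := congrFun h i
  simp only [Pi.zero_apply] at this ⊢
  rw [this, map_zero]

theorem galAct_mk (σ : AlgebraicClosure k ≃ₐ[k] AlgebraicClosure k)
    (v : Fin 2 → AlgebraicClosure k) (hv : v ≠ 0) :
    galAct k σ (Projectivization.mk (AlgebraicClosure k) v hv)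
      = Projectivization.mk (AlgebraicClosure k) (fun i => σ (v i)) (gal_ne_zero k σ hv) :=
  Projectivization.map_mk _ _ v hv

theorem galAct_inv_left (σ : AlgebraicClosure k ≃ₐ[k] AlgebraicClosure k)
    (p : ℙ (AlgebraicClosure k) (Fin 2 → AlgebraicClosure k)) :
    galAct k σ.symm (galAct k σ p) = p := by
  induction p using Projectivization.ind with
  | h v hv =>
    rw [galAct_mk, galAct_mk, Projectivization.mk_eq_mk_iff']
    exact ⟨1, by rw [one_smul]; exact funext fun i => (σ.symm_apply_apply (v i)).symm⟩

theorem galAct_inv_right (σ : AlgebraicClosure k ≃ₐ[k] AlgebraicClosure k)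
    (p : ℙ (AlgebraicClosure k) (Fin 2 → AlgebraicClosure k)) :
    galAct k σ (galAct k σ.symm p) = p := by
  have := galAct_inv_left k σ.symm p
  rwa [AlgEquiv.symm_symm] at this

theorem gal_pAct (σ : AlgebraicClosure k ≃ₐ[k] AlgebraicClosure k)
    (g : GL (Fin 2) (AlgebraicClosure k))
    (p : ℙ (AlgebraicClosure k) (Fin 2 → AlgebraicClosure k)) :
    galAct k σ (pAct g p)
      = pAct (Matrix.GeneralLinearGroup.map
          (σ : AlgebraicClosure k →+* AlgebraicClosure k) g) (galAct k σ p) := by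
  induction p using Projectivization.ind with
  | h v hv =>
    rw [pAct_mk, galAct_mk, galAct_mk, pAct_mk, Projectivization.mk_eq_mk_iff']
    refine ⟨1, ?_⟩
    rw [one_smul]
    funext i
    simp [Matrix.mulVec, dotProduct, Fin.sum_univ_two, map_add, map_mul,
      Matrix.GeneralLinearGroup.map_apply]

theorem gal_pglAct (σ : AlgebraicClosure k ≃ₐ[k] AlgebraicClosure k)
    (γ : GL (Fin 2) k) (p : ℙ (AlgebraicClosure k) (Fin 2 → AlgebraicClosure k)) :
    galAct k σ (pglAct k γ p) = pglAct k γ (galAct k σ p) := by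
  have h : pglAct k γ = pAct (Matrix.GeneralLinearGroup.map
      (algebraMap k (AlgebraicClosure k)) γ) := rfl
  rw [h, gal_pAct]
  congr 1
  ext i j
  exact σ.commutes _

theorem pglAct_eq (γ : GL (Fin 2) k) :
    pglAct k γ = pAct (Matrix.GeneralLinearGroup.map (algebraMap k (AlgebraicClosure k)) γ) :=
  rfl

theorem pglAct_pglAct (γ δ : GL (Fin 2) k)
    (p : ℙ (AlgebraicClosure k) (Fin 2 → AlgebraicClosure k)) :
    pglAct k γ (pglAct k δ p) = pglAct k (γ * δ) p := by
  rw [pglAct_eq, pglAct_eq, pglAct_eq, pAct_pAct, ← map_mul]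

theorem pglAct_one (p : ℙ (AlgebraicClosure k) (Fin 2 → AlgebraicClosure k)) :
    pglAct k (1 : GL (Fin 2) k) p = p := by
  rw [pglAct_eq, map_one, pAct_one]

theorem mem_range_of_fixed {x : AlgebraicClosure k}
    (hx : ∀ σ : AlgebraicClosure k ≃ₐ[k] AlgebraicClosure k, σ x = x) :
    ∃ a : k, algebraMap k (AlgebraicClosure k) a = x := by
  classical
  by_contra hcon
  push_neg at hcon
  have hint : IsIntegral k x := Algebra.IsIntegral.isIntegral x
  have hnotmem : x ∉ (algebraMap k (AlgebraicClosure k)).range := by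
    rintro ⟨a, rfl⟩; exact hcon a rfl
  have hdeg : 2 ≤ (minpoly k x).natDegree := (minpoly.two_le_natDegree_iff hint).2 hnotmem
  set f : Polynomial (AlgebraicClosure k) :=
    (minpoly k x).map (algebraMap k (AlgebraicClosure k)) with hfdef
  have hf0 : f ≠ 0 :=
    Polynomial.map_ne_zero_iff (algebraMap k (AlgebraicClosure k)).injective |>.2
      (minpoly.ne_zero hint)
  have hsep : f.Separable := Polynomial.Separable.map (Algebra.IsSeparable.isSeparable k x)
  have hnodup : f.roots.Nodup := Polynomial.nodup_roots hsep
  have hcard : 2 ≤ Multiset.card f.roots := by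
    have := (IsAlgClosed.splits
      ((minpoly k x).map (algebraMap k (AlgebraicClosure k)))).natDegree_eq_card_roots
    rw [Polynomial.natDegree_map, ← hfdef] at this
    omega
  have hxroot : x ∈ f.roots := by
    rw [Polynomial.mem_roots hf0]
    show f.eval x = 0
    rw [hfdef, Polynomial.eval_map, ← Polynomial.aeval_def]
    exact minpoly.aeval k x
  obtain ⟨y, hy⟩ : ∃ y, y ∈ f.roots.erase x := by
    apply Multiset.exists_mem_of_ne_zero
    intro h
    have := Multiset.card_erase_of_mem hxroot
    rw [h] at this
    simp at this
    omega
  have hyx : y ≠ x := fun h => (hnodup.notMem_erase) (h ▸ hy)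
  have hyroot : y ∈ f.roots := Multiset.mem_of_mem_erase hy
  have hyev : Polynomial.aeval y (minpoly k x) = 0 := by
    have := (Polynomial.mem_roots hf0).1 hyroot
    rw [Polynomial.IsRoot, hfdef, Polynomial.eval_map] at this
    rwa [Polynomial.aeval_def]
  obtain ⟨σ, hσ⟩ := minpoly.exists_algEquiv_of_root' (hint.isAlgebraic) hyev
  exact hyx (by rw [← hσ]; exact hx σ)

end Stmt3


/-- Let `k` be a perfect field of characteristic 2, with algebraic closure
`k̄` and absolute Galois group `G_k = Gal(k̄/k)`, acting coordinatewise on `ℙ¹(k̄)`, on which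
`PGL₂(k)` also acts by projective linear transformations (here represented by matrices
`γ ∈ GL₂(k)`; the action factors through `PGL₂(k)`, so the existence statements agree).
If `S, S′ ⊆ ℙ¹(k̄)` are `G_k`-stable subsets with `|S| = |S′| = 3`, then there exists
`γ ∈ PGL₂(k)` with `γ(S) = S′` if and only if `S` and `S′` are isomorphic as `G_k`-sets,
i.e. there is a `G_k`-equivariant bijection `S → S′`. -/
theorem exists_pgl_map_iff_gal_equivariant_bijection
    (S S' : Set (ℙ (AlgebraicClosure k) (Fin 2 → AlgebraicClosure k)))
    (hS : ∀ (σ : AlgebraicClosure k ≃ₐ[k] AlgebraicClosure k), ∀ p ∈ S, galAct k σ p ∈ S)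
    (hS' : ∀ (σ : AlgebraicClosure k ≃ₐ[k] AlgebraicClosure k), ∀ p ∈ S', galAct k σ p ∈ S')
    (hcardS : Nat.card S = 3) (hcardS' : Nat.card S' = 3) :
    (∃ γ : GL (Fin 2) k, pglAct k γ '' S = S') ↔
    (∃ e : S ≃ S', ∀ (σ : AlgebraicClosure k ≃ₐ[k] AlgebraicClosure k)
        (p : ℙ (AlgebraicClosure k) (Fin 2 → AlgebraicClosure k)) (hp : p ∈ S),
        (e ⟨galAct k σ p, hS σ p hp⟩ : ℙ (AlgebraicClosure k) (Fin 2 → AlgebraicClosure k))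
          = galAct k σ (e ⟨p, hp⟩)) := by
  constructor
  · rintro ⟨γ, hγ⟩
    refine ⟨{ toFun := fun x => ⟨pglAct k γ x.1, by
                rw [← hγ]; exact Set.mem_image_of_mem _ x.2⟩
              invFun := fun y => ⟨pglAct k γ⁻¹ y.1, by
                have hy : (y : ℙ (AlgebraicClosure k) (Fin 2 → AlgebraicClosure k))
                    ∈ pglAct k γ '' S := by rw [hγ]; exact y.2
                obtain ⟨x, hx, hxy⟩ := hy
                have : pglAct k γ⁻¹ y.1 = x := by
                  rw [← hxy, Stmt3.pglAct_pglAct, inv_mul_cancel, Stmt3.pglAct_one]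
                exact Set.mem_of_eq_of_mem this hx⟩
              left_inv := fun x => Subtype.ext (by
                show pglAct k γ⁻¹ (pglAct k γ x.1) = x.1
                rw [Stmt3.pglAct_pglAct, inv_mul_cancel, Stmt3.pglAct_one])
              right_inv := fun y => Subtype.ext (by
                show pglAct k γ (pglAct k γ⁻¹ y.1) = y.1
                rw [Stmt3.pglAct_pglAct, mul_inv_cancel, Stmt3.pglAct_one]) }, ?_⟩
    intro σ p hp
    exact (Stmt3.gal_pglAct k σ γ p).symm
  · rintro ⟨e, he⟩
    rw [Nat.card_coe_set_eq, Set.ncard_eq_three] at hcardS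
    obtain ⟨p₁, p₂, p₃, h12, h13, h23, hSeq⟩ := hcardS
    have hp₁ : p₁ ∈ S := by rw [hSeq]; simp
    have hp₂ : p₂ ∈ S := by rw [hSeq]; simp
    have hp₃ : p₃ ∈ S := by rw [hSeq]; simp
    set q₁ := (e ⟨p₁, hp₁⟩).1 with hq₁def
    set q₂ := (e ⟨p₂, hp₂⟩).1 with hq₂def
    set q₃ := (e ⟨p₃, hp₃⟩).1 with hq₃def
    have einj : ∀ {a b : S}, e a = e b → a = b := fun h => by
      exact e.injective h
    have k12 : q₁ ≠ q₂ := fun h =>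
      h12 (congrArg Subtype.val (e.injective (Subtype.ext h)) : p₁ = p₂)
    have k13 : q₁ ≠ q₃ := fun h =>
      h13 (congrArg Subtype.val (e.injective (Subtype.ext h)) : p₁ = p₃)
    have k23 : q₂ ≠ q₃ := fun h =>
      h23 (congrArg Subtype.val (e.injective (Subtype.ext h)) : p₂ = p₃)
    have hS'eq : S' = {q₁, q₂, q₃} := by
      refine (Set.eq_of_subset_of_ncard_le ?_ ?_ ?_).symm
      · intro q hq
        rcases hq with h | h | h
        · rw [h]; exact (e ⟨p₁, hp₁⟩).2
        · rw [h]; exact (e ⟨p₂, hp₂⟩).2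
        · rw [h]; exact (e ⟨p₃, hp₃⟩).2
      · have h3 : ({q₁, q₂, q₃} : Set (ℙ (AlgebraicClosure k) (Fin 2 → AlgebraicClosure k))).ncard
            = 3 := Set.ncard_eq_three.2 ⟨q₁, q₂, q₃, k12, k13, k23, rfl⟩
        have h4 : S'.ncard = 3 := by rw [← Nat.card_coe_set_eq]; exact hcardS'
        rw [h3, h4]
      · have h4 : S'.ncard = 3 := by rw [← Nat.card_coe_set_eq]; exact hcardS'
        exact Set.finite_of_ncard_ne_zero (by omega)
    -- the element of S is one of the three points
    have hmem : ∀ p (hp : p ∈ S), p = p₁ ∨ p = p₂ ∨ p = p₃ := by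
      intro p hp; rw [hSeq] at hp; simpa using hp
    -- a matrix over k̄ carrying the triple
    obtain ⟨g, hg1, hg2, hg3⟩ := Stmt3.exists_pAct_triple h12 h13 h23 k12 k13 k23
    have hgall : ∀ p (hp : p ∈ S), Stmt3.pAct g p = (e ⟨p, hp⟩).1 := by
      intro p hp
      rcases hmem p hp with h | h | h <;> subst h
      · exact hg1
      · exact hg2
      · exact hg3
    -- Galois conjugates of g agree with g on S
    have hconj : ∀ σ : AlgebraicClosure k ≃ₐ[k] AlgebraicClosure k, ∀ p (hp : p ∈ S),
        Stmt3.pAct (Matrix.GeneralLinearGroup.map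
          (σ : AlgebraicClosure k →+* AlgebraicClosure k) g) p = Stmt3.pAct g p := by
      intro σ p hp
      set p' := galAct k σ.symm p with hp'def
      have hp' : p' ∈ S := hS σ.symm p hp
      have hpp' : galAct k σ p' = p := Stmt3.galAct_inv_right k σ p
      calc Stmt3.pAct (Matrix.GeneralLinearGroup.map
            (σ : AlgebraicClosure k →+* AlgebraicClosure k) g) p
          = Stmt3.pAct (Matrix.GeneralLinearGroup.map
            (σ : AlgebraicClosure k →+* AlgebraicClosure k) g) (galAct k σ p') := by rw [hpp']
        _ = galAct k σ (Stmt3.pAct g p') := (Stmt3.gal_pAct k σ g p').symm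
        _ = galAct k σ (e ⟨p', hp'⟩).1 := by rw [hgall p' hp']
        _ = (e ⟨galAct k σ p', hS σ p' hp'⟩).1 := (he σ p' hp').symm
        _ = (e ⟨p, hp⟩).1 := by
              congr 2
              exact Subtype.ext hpp'
        _ = Stmt3.pAct g p := (hgall p hp).symm
    -- hence σ(g) = c • g for a scalar c
    have hscal : ∀ σ : AlgebraicClosure k ≃ₐ[k] AlgebraicClosure k,
        ∃ c : (AlgebraicClosure k)ˣ,
          ((Matrix.GeneralLinearGroup.map
              (σ : AlgebraicClosure k →+* AlgebraicClosure k) g :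
                GL (Fin 2) (AlgebraicClosure k)) : Matrix (Fin 2) (Fin 2) (AlgebraicClosure k))
            = (c : AlgebraicClosure k) • (g : Matrix (Fin 2) (Fin 2) (AlgebraicClosure k)) :=
      fun σ => Stmt3.smul_of_pAct_eq _ g h12 h13 h23
        (hconj σ p₁ hp₁) (hconj σ p₂ hp₂) (hconj σ p₃ hp₃)
    -- a nonzero entry of g
    have hdetg : (g : Matrix (Fin 2) (Fin 2) (AlgebraicClosure k)).det ≠ 0 :=
      isUnit_iff_ne_zero.1 ((Matrix.isUnit_iff_isUnit_det _).1 ⟨g, rfl⟩)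
    obtain ⟨i₀, j₀, hij⟩ : ∃ i j, (g : Matrix (Fin 2) (Fin 2) (AlgebraicClosure k)) i j ≠ 0 := by
      by_contra hz
      push_neg at hz
      apply hdetg
      have : (g : Matrix (Fin 2) (Fin 2) (AlgebraicClosure k)) = 0 :=
        Matrix.ext fun i j => hz i j
      rw [this, Matrix.det_zero]
    set d := (g : Matrix (Fin 2) (Fin 2) (AlgebraicClosure k)) i₀ j₀ with hddef
    set A : Matrix (Fin 2) (Fin 2) (AlgebraicClosure k) :=
      d⁻¹ • (g : Matrix (Fin 2) (Fin 2) (AlgebraicClosure k)) with hAdef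
    have hAfix : ∀ (σ : AlgebraicClosure k ≃ₐ[k] AlgebraicClosure k) i j, σ (A i j) = A i j := by
      intro σ i j
      obtain ⟨c, hc⟩ := hscal σ
      have hentry : ∀ a b, σ ((g : Matrix (Fin 2) (Fin 2) (AlgebraicClosure k)) a b)
          = (c : AlgebraicClosure k) * (g : Matrix (Fin 2) (Fin 2) (AlgebraicClosure k)) a b := by
        intro a b
        have := congrFun (congrFun hc a) b
        rwa [Matrix.GeneralLinearGroup.map_apply] at this
      have hc0 : (c : AlgebraicClosure k) ≠ 0 := c.ne_zero
      have hσd : σ d = (c : AlgebraicClosure k) * d := hentry i₀ j₀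
      rw [hAdef, Matrix.smul_apply, smul_eq_mul, map_mul, map_inv₀, hσd, hentry]
      field_simp
    -- descend the normalized matrix to k
    have hchoice : ∀ i j, ∃ a : k, algebraMap k (AlgebraicClosure k) a = A i j :=
      fun i j => Stmt3.mem_range_of_fixed k (fun σ => hAfix σ i j)
    choose N hN using fun i => hchoice i
    set Nm : Matrix (Fin 2) (Fin 2) k := Matrix.of (fun i j => N i j) with hNmdef
    have hNmap : Nm.map (algebraMap k (AlgebraicClosure k)) = A :=
      Matrix.ext fun i j => hN i j
    have hdetA : A.det ≠ 0 := by
      rw [hAdef, Matrix.det_smul]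
      exact mul_ne_zero (pow_ne_zero _ (inv_ne_zero hij)) hdetg
    have hdet2 : algebraMap k (AlgebraicClosure k) Nm.det = A.det := by
      rw [← hNmap]; exact RingHom.map_det _ _
    have hdetN : Nm.det ≠ 0 := by
      intro h0
      apply hdetA
      rw [← hdet2, h0, map_zero]
    have hNunit : IsUnit Nm := (Matrix.isUnit_iff_isUnit_det Nm).2 (isUnit_iff_ne_zero.2 hdetN)
    refine ⟨hNunit.unit, ?_⟩
    -- the action of the descended matrix agrees with that of g
    have hact : ∀ p, pglAct k hNunit.unit p = Stmt3.pAct g p := by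
      intro p
      rw [Stmt3.pglAct_eq]
      refine Stmt3.pAct_of_smul (c := (Units.mk0 d hij)⁻¹) ?_ p
      have : ((Matrix.GeneralLinearGroup.map (algebraMap k (AlgebraicClosure k)) hNunit.unit :
          GL (Fin 2) (AlgebraicClosure k)) : Matrix (Fin 2) (Fin 2) (AlgebraicClosure k)) = A := by
        ext i j
        rw [Matrix.GeneralLinearGroup.map_apply]
        have : (hNunit.unit : Matrix (Fin 2) (Fin 2) k) = Nm := hNunit.unit_spec
        rw [this]
        exact hN i j
      rw [this, hAdef]
      simp [Units.val_inv_eq_inv_val]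
    rw [hSeq, hS'eq]
    rw [Set.image_insert_eq, Set.image_insert_eq, Set.image_singleton]
    rw [hact p₁, hact p₂, hact p₃, hg1, hg2, hg3]


end
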